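/- Let n ≥ 1, let f : ℤⁿ → ℤ be an affine function, let s ∈ {1,…,n}, and let L ⊆ {1,…,n} × {1,…,n} be a set of ordered pairs. Let S be the set of (a₁,…,aₙ) ∈ ℤⁿ such that a₁,…,a_s ≥ 0, a_{s+1},…,aₙ ≤ 0, and a_j − a_k ≥ 0 for every (j,k) ∈ L. Assume f(a) ≥ 0 for every a ∈ S. Then there exist nonnegative real numbers α₁,…,αₙ, nonnegative real numbers γ_{j,k} for (j,k) ∈ L, and a nonnegative integer β such that f(a₁,…,aₙ) = Σ_{i=1}^{n} αᵢ·|aᵢ| + Σ_{(j,k)∈L} γ_{j,k}·(a_j − a_k) + β for every (a₁,…,aₙ) ∈ S. -/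

import Mathlib

open Finset

/-- dot product of two rational vectors over a finite index type -/
def dotq {η : Type*} [Fintype η] (u x : η → ℚ) : ℚ := ∑ j, u j * x j

lemma dotq_sum_left {η ι : Type*} [Fintype η] (t : Finset ι) (f : ι → η → ℚ) (x : η → ℚ) :
    dotq (∑ i ∈ t, f i) x = ∑ i ∈ t, dotq (f i) x := by
  unfold dotq
  rw [Finset.sum_comm]
  congr 1; funext j
  simp [Finset.sum_mul]

lemma dotq_smul_left {η : Type*} [Fintype η] (t : ℚ) (u x : η → ℚ) :
    dotq (t • u) x = t * dotq u x := by
  unfold dotq; simp [Finset.mul_sum, mul_assoc]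

lemma dotq_sub_left {η : Type*} [Fintype η] (u v x : η → ℚ) :
    dotq (u - v) x = dotq u x - dotq v x := by
  unfold dotq; simp [sub_mul, Finset.sum_sub_distrib]

lemma dotq_sub_right {η : Type*} [Fintype η] (u x y : η → ℚ) :
    dotq u (x - y) = dotq u x - dotq u y := by
  unfold dotq; simp [mul_sub, Finset.sum_sub_distrib]

lemma dotq_smul_right {η : Type*} [Fintype η] (t : ℚ) (u x : η → ℚ) :
    dotq u (t • x) = t * dotq u x := by
  unfold dotq; simp [Finset.mul_sum]; congr 1; funext j; ring

/-- Algebraic Farkas lemma over ℚ, by induction on the number of generators. -/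
theorem farkas_q {η : Type*} [Fintype η] :
    ∀ (m : ℕ) (a : Fin m → η → ℚ) (c : η → ℚ),
    (∃ μ : Fin m → ℚ, (∀ i, 0 ≤ μ i) ∧ c = ∑ i, μ i • a i) ∨
    (∃ x : η → ℚ, (∀ i, 0 ≤ dotq (a i) x) ∧ dotq c x < 0) := by
  intro m
  induction m with
  | zero =>
    intro a c
    by_cases hc : c = 0
    · exact Or.inl ⟨fun i => 0, fun i => le_refl _, by simp [hc]⟩
    · refine Or.inr ⟨-c, fun i => i.elim0, ?_⟩
      have hne : ∃ j, c j ≠ 0 := by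
        by_contra h
        push_neg at h
        exact hc (funext h)
      obtain ⟨j, hj⟩ := hne
      have : 0 < ∑ j, c j * c j := by
        apply Finset.sum_pos' (fun i _ => mul_self_nonneg _)
        exact ⟨j, Finset.mem_univ j, mul_self_pos.2 hj⟩
      unfold dotq
      have : ∑ j, c j * (-c) j = -∑ j, c j * c j := by
        simp [Finset.sum_neg_distrib]
      rw [this]
      linarith [Finset.sum_pos' (fun i (_ : i ∈ Finset.univ) => mul_self_nonneg (c i))
        ⟨j, Finset.mem_univ j, mul_self_pos.2 hj⟩]
  | succ m ih =>
    intro a c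
    set a' : Fin m → η → ℚ := fun i => a i.castSucc with ha'
    set aL : η → ℚ := a (Fin.last m) with haL
    rcases ih a' c with ⟨μ, hμ, hc⟩ | ⟨x₀, hx₀, hcx₀⟩
    · -- c already in the cone of the first m vectors
      refine Or.inl ⟨Fin.snoc μ 0, ?_, ?_⟩
      · intro i
        refine Fin.lastCases ?_ ?_ i
        · simp
        · intro j; simpa using hμ j
      · rw [Fin.sum_univ_castSucc]
        simp [hc]
        rfl
    · set β : ℚ := dotq aL x₀ with hβdef
      by_cases hβ : 0 ≤ β
      · refine Or.inr ⟨x₀, ?_, hcx₀⟩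
        intro i
        refine Fin.lastCases ?_ ?_ i
        · exact hβ
        · intro j; exact hx₀ j
      · push_neg at hβ
        set a'' : Fin m → η → ℚ := fun i => β • a' i - (dotq (a' i) x₀) • aL with ha''
        set c' : η → ℚ := β • c - (dotq c x₀) • aL with hc'def
        rcases ih a'' c' with ⟨μ, hμ, hc'⟩ | ⟨x₁, hx₁, hcx₁⟩
        · -- reconstruct the cone representation
          set t : ℚ := (dotq c x₀ - ∑ i, μ i * dotq (a' i) x₀) / β with ht
          have htnum : dotq c x₀ - ∑ i, μ i * dotq (a' i) x₀ ≤ 0 := by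
            have h1 : dotq c x₀ < 0 := hcx₀
            have h2 : 0 ≤ ∑ i, μ i * dotq (a' i) x₀ :=
              Finset.sum_nonneg fun i _ => mul_nonneg (hμ i) (hx₀ i)
            linarith
          have htpos : 0 ≤ t := by
            rw [ht, ← neg_div_neg_eq]
            exact div_nonneg (by linarith) (by linarith)
          refine Or.inl ⟨Fin.snoc μ t, ?_, ?_⟩
          · intro i
            refine Fin.lastCases ?_ ?_ i
            · simpa using htpos
            · intro j; simpa using hμ j
          · have hβne : β ≠ 0 := ne_of_lt hβ
            have hbt : t * β = dotq c x₀ - ∑ i, μ i * dotq (a' i) x₀ :=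
              div_mul_cancel₀ _ hβne
            have hc'j : ∀ j, β * c j - dotq c x₀ * aL j
                = ∑ i, μ i * (β * a' i j - dotq (a' i) x₀ * aL j) := by
              intro j
              have h := congrFun hc' j
              simpa [hc'def, ha'', Finset.sum_apply, smul_eq_mul, Pi.sub_apply,
                Pi.smul_apply, mul_sub] using h
            rw [Fin.sum_univ_castSucc]
            simp only [Fin.snoc_castSucc, Fin.snoc_last]
            funext j
            simp only [Pi.add_apply, Finset.sum_apply, Pi.smul_apply, smul_eq_mul]
            apply mul_left_cancel₀ hβne
            have expand : ∑ i, μ i * (β * a' i j - dotq (a' i) x₀ * aL j)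
                = ∑ i, β * (μ i * a' i j) - (∑ i, μ i * dotq (a' i) x₀) * aL j := by
              rw [Finset.sum_mul, ← Finset.sum_sub_distrib]
              exact Finset.sum_congr rfl (fun i _ => by ring)
            have hbtj : β * (t * aL j) = (dotq c x₀ - ∑ i, μ i * dotq (a' i) x₀) * aL j := by
              rw [← mul_assoc, mul_comm β t, hbt]
            have h := hc'j j
            rw [expand] at h
            have goal : β * c j = ∑ i, β * (μ i * a' i j) + β * (t * aL j) := by
              rw [hbtj]; linear_combination h
            rw [mul_add, Finset.mul_sum]
            exact goal
        · -- build a new separating vector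
          refine Or.inr ⟨β • x₁ - (dotq aL x₁) • x₀, ?_, ?_⟩
          · intro i
            refine Fin.lastCases ?_ ?_ i
            · rw [dotq_sub_right, dotq_smul_right, dotq_smul_right]
              rw [← haL, ← hβdef]
              ring_nf
              simp [mul_comm]
            · intro j
              have := hx₁ j
              rw [ha''] at this
              rw [dotq_sub_left, dotq_smul_left, dotq_smul_left] at this
              rw [dotq_sub_right, dotq_smul_right, dotq_smul_right]
              have hswap : a j.castSucc = a' j := rfl
              rw [hswap]
              linarith [this]
          · have := hcx₁
            rw [hc'def, dotq_sub_left, dotq_smul_left, dotq_smul_left] at this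
            rw [dotq_sub_right, dotq_smul_right, dotq_smul_right]
            linarith [this]



/-- integral Farkas-type lemma.  Let `f : ℤⁿ → ℤ` be affine
(`f a = c₀ + ∑ cᵢ aᵢ`), let `S` be the set of integer vectors with `aᵢ ≥ 0` for the
first `s` coordinates, `aᵢ ≤ 0` for the remaining ones, and `a_j - a_k ≥ 0` for all
`(j,k) ∈ L`.  If `f ≥ 0` on `S`, then there are nonnegative reals `αᵢ`, `γ_{j,k}` and
a nonnegative integer `b` with
`f a = ∑ αᵢ |aᵢ| + ∑_{(j,k)∈L} γ_{j,k} (a_j - a_k) + b` for all `a ∈ S`. -/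
theorem farkas_affine_nonneg (n : ℕ) (hn : 1 ≤ n) (c₀ : ℤ) (c : Fin n → ℤ)
    (f : (Fin n → ℤ) → ℤ) (hf : ∀ a : Fin n → ℤ, f a = c₀ + ∑ i, c i * a i)
    (s : ℕ) (hs1 : 1 ≤ s) (hsn : s ≤ n)
    (L : Finset (Fin n × Fin n))
    (S : Set (Fin n → ℤ))
    (hS : S = {a : Fin n → ℤ |
      (∀ i : Fin n, i.val < s → 0 ≤ a i) ∧
      (∀ i : Fin n, s ≤ i.val → a i ≤ 0) ∧
      ∀ pr ∈ L, 0 ≤ a pr.1 - a pr.2})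
    (hpos : ∀ a ∈ S, 0 ≤ f a) :
    ∃ (α : Fin n → ℝ) (γ : Fin n × Fin n → ℝ) (b : ℕ),
      (∀ i, 0 ≤ α i) ∧ (∀ pr, 0 ≤ γ pr) ∧
      ∀ a ∈ S, (f a : ℝ) =
        (∑ i, α i * |(a i : ℝ)|) + (∑ pr ∈ L, γ pr * ((a pr.1 : ℝ) - (a pr.2 : ℝ))) + b := by
  classical
  -- `0 ∈ S`, hence `0 ≤ c₀`
  have h0S : (0 : Fin n → ℤ) ∈ S := by
    rw [hS]; refine ⟨fun i _ => le_refl _, fun i _ => le_refl _, fun pr _ => by simp⟩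
  have hc₀ : 0 ≤ c₀ := by
    have h := hpos 0 h0S
    rw [hf] at h
    simpa using h
  -- sign vector
  set σ : Fin n → ℚ := fun i => if i.val < s then 1 else -1 with hσ
  -- generator vectors
  set v : (Fin n ⊕ {pr : Fin n × Fin n // pr ∈ L}) → Fin n → ℚ :=
    fun k => Sum.rec (fun i => fun j => if j = i then σ i else 0)
      (fun pr => fun j => (if j = pr.1.1 then 1 else 0) - (if j = pr.1.2 then 1 else 0)) k with hv
  have dv1 : ∀ (i : Fin n) (x : Fin n → ℚ), dotq (v (Sum.inl i)) x = σ i * x i := by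
    intro i x
    unfold dotq
    simp [hv, ite_mul, Finset.sum_ite_eq']
  have dv2 : ∀ (pr : {pr : Fin n × Fin n // pr ∈ L}) (x : Fin n → ℚ),
      dotq (v (Sum.inr pr)) x = x pr.1.1 - x pr.1.2 := by
    intro pr x
    unfold dotq
    simp [hv, sub_mul, Finset.sum_sub_distrib, ite_mul, Finset.sum_ite_eq']
  set cq : Fin n → ℚ := fun j => (c j : ℚ) with hcq
  set e : (Fin n ⊕ {pr : Fin n × Fin n // pr ∈ L}) ≃
      Fin (Fintype.card (Fin n ⊕ {pr : Fin n × Fin n // pr ∈ L})) :=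
    Fintype.equivFin _ with he
  rcases farkas_q (Fintype.card (Fin n ⊕ {pr : Fin n × Fin n // pr ∈ L}))
      (fun k => v (e.symm k)) cq with ⟨μ, hμ, hc⟩ | ⟨x, hx, hcx⟩
  · -- membership case : build the coefficients
    set ν : (Fin n ⊕ {pr : Fin n × Fin n // pr ∈ L}) → ℚ := fun i => μ (e i) with hν
    have hν0 : ∀ i, 0 ≤ ν i := fun i => hμ (e i)
    have hc2 : cq = ∑ i : (Fin n ⊕ {pr : Fin n × Fin n // pr ∈ L}), ν i • v i := by
      rw [hc, ← Equiv.sum_comp e (fun k => μ k • v (e.symm k))]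
      simp [hν]
    refine ⟨fun i => ((ν (Sum.inl i) : ℚ) : ℝ),
      fun pr => if h : pr ∈ L then ((ν (Sum.inr ⟨pr, h⟩) : ℚ) : ℝ) else 0,
      c₀.toNat, fun i => Rat.cast_nonneg.2 (hν0 (Sum.inl i)), ?_, ?_⟩
    · intro pr
      by_cases h : pr ∈ L
      · simp only [dif_pos h]
        exact_mod_cast hν0 _
      · simp [dif_neg h]
    · intro a haS
      rw [hS] at haS
      obtain ⟨ha1, ha2, ha3⟩ := haS
      set aq : Fin n → ℚ := fun j => (a j : ℚ) with haq
      have key : dotq cq aq = ∑ i : Fin n, ν (Sum.inl i) * (σ i * aq i)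
          + ∑ pr : {pr : Fin n × Fin n // pr ∈ L}, ν (Sum.inr pr) * (aq pr.1.1 - aq pr.1.2) := by
        rw [hc2, dotq_sum_left]
        rw [Fintype.sum_sum_type]
        congr 1
        · exact Finset.sum_congr rfl fun i _ => by rw [dotq_smul_left, dv1]
        · exact Finset.sum_congr rfl fun pr _ => by rw [dotq_smul_left, dv2]
      -- cast everything to ℝ
      have keyR : (∑ i, (c i : ℝ) * (a i : ℝ))
          = ∑ i : Fin n, ((ν (Sum.inl i) : ℚ) : ℝ) * (((σ i : ℚ) : ℝ) * (a i : ℝ))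
          + ∑ pr : {pr : Fin n × Fin n // pr ∈ L},
              ((ν (Sum.inr pr) : ℚ) : ℝ) * ((a pr.1.1 : ℝ) - (a pr.1.2 : ℝ)) := by
        have e0 : (∑ i, (c i : ℝ) * (a i : ℝ)) = ((dotq cq aq : ℚ) : ℝ) := by
          unfold dotq
          push_cast
          refine Finset.sum_congr rfl fun i _ => ?_
          simp only [hcq, haq]
          push_cast
          rfl
        rw [e0, key]
        simp only [haq]
        push_cast
        rfl
      rw [hf]
      push_cast
      rw [keyR]
      have habs : ∀ i : Fin n, ((ν (Sum.inl i) : ℚ) : ℝ) * (((σ i : ℚ) : ℝ) * (a i : ℝ))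
          = ((ν (Sum.inl i) : ℚ) : ℝ) * |(a i : ℝ)| := by
        intro i
        congr 1
        by_cases h : i.val < s
        · rw [hσ]; simp only [if_pos h]
          rw [abs_of_nonneg (by exact_mod_cast ha1 i h)]
          norm_num
        · rw [hσ]; simp only [if_neg h]
          rw [abs_of_nonpos (by exact_mod_cast ha2 i (le_of_not_gt h))]
          push_cast
          ring
      have hgam : (∑ pr ∈ L, (if h : pr ∈ L then ((ν (Sum.inr ⟨pr, h⟩) : ℚ) : ℝ) else 0)
              * ((a pr.1 : ℝ) - (a pr.2 : ℝ)))
          = ∑ pr : {pr : Fin n × Fin n // pr ∈ L},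
              ((ν (Sum.inr pr) : ℚ) : ℝ) * ((a pr.1.1 : ℝ) - (a pr.1.2 : ℝ)) := by
        rw [Finset.univ_eq_attach]
        rw [← Finset.sum_attach L (fun pr => (if h : pr ∈ L then ((ν (Sum.inr ⟨pr, h⟩) : ℚ) : ℝ) else 0)
              * ((a pr.1 : ℝ) - (a pr.2 : ℝ)))]
        refine Finset.sum_congr rfl fun pr _ => ?_
        rw [dif_pos pr.2]
      rw [Finset.sum_congr rfl (fun i _ => habs i), hgam]
      have : ((c₀.toNat : ℕ) : ℝ) = (c₀ : ℝ) := by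
        exact_mod_cast congrArg (fun z : ℤ => (z : ℝ)) (Int.toNat_of_nonneg hc₀)
      rw [this]
      ring
  · -- separating vector case : contradiction with `hpos`
    exfalso
    have hxall : ∀ i : (Fin n ⊕ {pr : Fin n × Fin n // pr ∈ L}), 0 ≤ dotq (v i) x := by
      intro i
      have := hx (e i)
      simpa using this
    -- clear denominators
    set N : ℕ := ∏ j, (x j).den with hN
    have hNpos : 0 < N := Finset.prod_pos fun j _ => (x j).pos
    set z : Fin n → ℤ := fun j => (x j).num * ((N / (x j).den : ℕ) : ℤ) with hzdef
    have hz : ∀ j, (z j : ℚ) = (N : ℚ) * x j := by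
      intro j
      have hdvd : (x j).den ∣ N := Finset.dvd_prod_of_mem _ (Finset.mem_univ j)
      have hden : ((x j).den : ℚ) ≠ 0 := by exact_mod_cast (x j).den_ne_zero
      have h2 : (((N / (x j).den : ℕ) : ℤ) : ℚ) = (N : ℚ) / ((x j).den : ℚ) := by
        rw [Int.cast_natCast, Nat.cast_div hdvd hden]
      have hnum : ((x j).num : ℚ) = x j * ((x j).den : ℚ) := (Rat.mul_den_eq_num (x j)).symm
      simp only [hzdef]
      rw [Int.cast_mul, h2, hnum]
      field_simp
    -- the scaled integer vector and all its multiples lie in S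
    have hmem : ∀ k : ℕ, (fun j => (k : ℤ) * z j) ∈ S := by
      intro k
      rw [hS]
      refine ⟨?_, ?_, ?_⟩
      · intro i hi
        have h := hxall (Sum.inl i)
        rw [dv1] at h
        rw [hσ] at h; simp only [if_pos hi, one_mul] at h
        have : (0 : ℚ) ≤ (z i : ℚ) := by
          rw [hz]; positivity
        have : (0 : ℤ) ≤ z i := by exact_mod_cast this
        positivity
      · intro i hi
        have h := hxall (Sum.inl i)
        rw [dv1] at h
        rw [hσ] at h; simp only [if_neg (Nat.not_lt.mpr hi), neg_one_mul] at h
        have hx0 : x i ≤ 0 := by linarith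
        have : (z i : ℚ) ≤ 0 := by
          rw [hz]
          exact mul_nonpos_of_nonneg_of_nonpos (by positivity) hx0
        have hzi : z i ≤ 0 := by exact_mod_cast this
        exact mul_nonpos_of_nonneg_of_nonpos (by positivity) hzi
      · intro pr hpr
        have h := hxall (Sum.inr ⟨pr, hpr⟩)
        rw [dv2] at h
        have : (0 : ℚ) ≤ (z pr.1 : ℚ) - (z pr.2 : ℚ) := by
          rw [hz, hz, ← mul_sub]
          positivity
        have hzz : (0 : ℤ) ≤ z pr.1 - z pr.2 := by exact_mod_cast this
        have : (k : ℤ) * z pr.1 - (k : ℤ) * z pr.2 = (k : ℤ) * (z pr.1 - z pr.2) := by ring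
        rw [this]
        positivity
    set D : ℤ := ∑ j, c j * z j with hD
    have hDneg : D < 0 := by
      have : (D : ℚ) < 0 := by
        have : (D : ℚ) = (N : ℚ) * dotq cq x := by
          rw [hD]
          push_cast
          unfold dotq
          rw [Finset.mul_sum]
          refine Finset.sum_congr rfl fun j _ => ?_
          rw [hz j]
          push_cast
          ring
        rw [this]
        have hNq : (0 : ℚ) < (N : ℚ) := by exact_mod_cast hNpos
        exact mul_neg_of_pos_of_neg hNq hcx
      exact_mod_cast this
    set k : ℕ := c₀.toNat + 1 with hk
    have hfk := hpos _ (hmem k)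
    rw [hf] at hfk
    have hsum : ∑ i, c i * ((k : ℤ) * z i) = (k : ℤ) * D := by
      rw [hD, Finset.mul_sum]
      exact Finset.sum_congr rfl fun i _ => by ring
    rw [hsum] at hfk
    have hkD : (k : ℤ) * D ≤ (k : ℤ) * (-1) :=
      mul_le_mul_of_nonneg_left (by omega) (by positivity)
    have hck : (c₀ : ℤ) < (k : ℤ) := by
      have := Int.self_le_toNat c₀
      omega
    omega
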